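/- Let s : ℤ/2 → ℤ/4 send 0 ↦ 0 and 1 ↦ 1, and let F : ℤ/2 × ℤ/2 → ℤ/4 be defined by F(1,1) = 1 and F(g,h) = 0 otherwise. Then for all g,h,k ∈ ℤ/2: (a) F(h,k) + F(g,h+k) − F(g,h) − F(g+h,k) = 0 in ℤ/4 (so the strictification with the trivial action of ℤ/4 on ℤ/4 has vanishing Postnikov cocycle); and (b) with the action a ▷ b = (2a+1)·b of ℤ/4 on ℤ/4, one has (s(g) ▷ F(h,k)) + F(g,h+k) − F(g,h) − F(g+h,k) = 2·β(g,h,k) in ℤ/4, where β : (ℤ/2)³ → ℤ/2 is β(g,h,k) = g·h·k and 2·(−) denotes the embedding ℤ/2 → ℤ/4 sending x to 2x. -/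

import Mathlib

/-- for the section `s : ℤ/2 → ℤ/4` and the lift
`F : ℤ/2 × ℤ/2 → ℤ/4` (with `F(1,1) = 1`, zero otherwise), the trivial action
gives a vanishing Postnikov cocycle, while the action `a ▷ b = (2a+1)b`
gives the nontrivial cocycle `β(g,h,k) = g·h·k` (embedded via `x ↦ 2x`). -/
theorem stmt4 (s : ZMod 2 → ZMod 4) (hs0 : s 0 = 0) (hs1 : s 1 = 1)
    (F : ZMod 2 → ZMod 2 → ZMod 4)
    (hF11 : F 1 1 = 1) (hF0 : ∀ g h, ¬(g = 1 ∧ h = 1) → F g h = 0)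
    (β : ZMod 2 → ZMod 2 → ZMod 2 → ZMod 2) (hβ : ∀ g h k, β g h k = g * h * k)
    (e : ZMod 2 → ZMod 4) (he0 : e 0 = 0) (he1 : e 1 = 2) :
    -- (a) trivial action: vanishing Postnikov cocycle
    (∀ g h k : ZMod 2, F h k + F g (h + k) - F g h - F (g + h) k = 0) ∧
    -- (b) action a ▷ b = (2a+1)b: Postnikov cocycle 2·β(g,h,k)
    (∀ g h k : ZMod 2,
      (2 * s g + 1) * F h k + F g (h + k) - F g h - F (g + h) k = e (β g h k)) := by
  have hF00 : F 0 0 = 0 := hF0 0 0 (by decide)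
  have hF01 : F 0 1 = 0 := hF0 0 1 (by decide)
  have hF10 : F 1 0 = 0 := hF0 1 0 (by decide)
  have h2 : ∀ x : ZMod 2, x = 0 ∨ x = 1 := by decide
  have h11 : (1 : ZMod 2) + 1 = 0 := rfl
  constructor <;> intro g h k <;> rcases h2 g with rfl | rfl <;> rcases h2 h with rfl | rfl <;>
    rcases h2 k with rfl | rfl <;> simp_all <;> decide
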